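/- Patience limit: for every t there exists c < 1 such that for every δ ∈ (0,1) and every contract (s,p) that is optimal at δ, one has s_t ≤ c; in particular the optimal knowledge level in any fixed period t stays bounded away from 1 as δ → 1. -/

import Mathlib

open Set Filter

set_option maxHeartbeats 1000000

/-- Principal's continuation value `Π_t(s,p) = Σ_{τ=t}^∞ δ^{τ−t}(π(s_τ) − p_τ)`. -/
noncomputable def PiVal (δ : ℝ) (π : ℝ → ℝ) (s p : ℕ → ℝ) (t : ℕ) : ℝ :=
  ∑' k : ℕ, δ ^ k * (π (s (t + k)) - p (t + k))

/-- Expert's continuation value `W_t(s,p) = Σ_{τ=t}^∞ δ^{τ−t}(w(s_τ) + p_τ)`. -/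
noncomputable def WVal (δ : ℝ) (w : ℝ → ℝ) (s p : ℕ → ℝ) (t : ℕ) : ℝ :=
  ∑' k : ℕ, δ ^ k * (w (s (t + k)) + p (t + k))

/-- A contract: `s` takes values in `[0,1]`, `s 0 = 0`, and `t ↦ δ^t·p_t` is summable. -/
def IsContract (δ : ℝ) (s p : ℕ → ℝ) : Prop :=
  (∀ t, s t ∈ Set.Icc (0 : ℝ) 1) ∧ s 0 = 0 ∧ Summable fun t => δ ^ t * p t

/-- Implementability: feasibility (monotone `s`, nonnegative `p`) plus (P-IC) and (E-IC). -/
def Implementable (δ : ℝ) (π w : ℝ → ℝ) (s p : ℕ → ℝ) : Prop :=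
  IsContract δ s p ∧ Monotone s ∧ (∀ t, 0 ≤ p t) ∧
  (∀ t, π (s t) / (1 - δ) ≤ PiVal δ π s p t) ∧
  (∀ t, w (s t) / (1 - δ) ≤ WVal δ w s p (t + 1))

/-- An optimal contract maximizes the principal's time-0 profit among implementable contracts. -/
def Optimal (δ : ℝ) (π w : ℝ → ℝ) (s p : ℕ → ℝ) : Prop :=
  Implementable δ π w s p ∧
  ∀ s' p' : ℕ → ℝ, Implementable δ π w s' p' → PiVal δ π s' p' 0 ≤ PiVal δ π s p 0

lemma summable_aux {δ : ℝ} (hδ0 : 0 < δ) (hδ1 : δ < 1) (f : ℕ → ℝ) (M : ℝ)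
    (hf : ∀ k, |f k| ≤ M) : Summable fun k => δ ^ k * f k := by
  apply Summable.of_norm_bounded (g := fun k => M * δ ^ k)
    ((summable_geometric_of_lt_one hδ0.le hδ1).mul_left M)
  intro k
  rw [Real.norm_eq_abs, abs_mul, abs_pow, abs_of_pos hδ0, mul_comm M]
  exact mul_le_mul_of_nonneg_left (hf k) (pow_nonneg hδ0.le k)

lemma star_ineq (π w : ℝ → ℝ)
    (hπm : MonotoneOn π (Set.Icc 0 1)) (hwa : AntitoneOn w (Set.Icc 0 1))
    {δ : ℝ} (hδ0 : 0 < δ) (hδ1 : δ < 1) {s p : ℕ → ℝ}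
    (h : Implementable δ π w s p) (t : ℕ) :
    w (s t) ≤ w (s (t + 1)) + (π 1 - π (s (t + 1))) := by
  obtain ⟨⟨hs01, hs0, hpsum⟩, hmono, hpnn, hPIC, hEIC⟩ := h
  have h0m : (0:ℝ) ∈ Set.Icc (0:ℝ) 1 := ⟨le_refl _, zero_le_one⟩
  have h1m : (1:ℝ) ∈ Set.Icc (0:ℝ) 1 := ⟨zero_le_one, le_refl _⟩
  have h1δ : 0 < 1 - δ := by linarith
  have hgeom : Summable fun k : ℕ => δ ^ k := summable_geometric_of_lt_one hδ0.le hδ1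
  have hπlb : ∀ j, π 0 ≤ π (s j) := fun j => hπm h0m (hs01 j) (hs01 j).1
  have hπub : ∀ j, π (s j) ≤ π 1 := fun j => hπm (hs01 j) h1m (hs01 j).2
  have hπbd : ∀ j, |π (s j)| ≤ max |π 0| |π 1| := fun j => abs_le.mpr
    ⟨by have := neg_abs_le (π 0); have := le_max_left |π 0| |π 1|; linarith [hπlb j],
     by have := le_abs_self (π 1); have := le_max_right |π 0| |π 1|; linarith [hπub j]⟩
  have hwub : ∀ j k, j ≤ k → w (s k) ≤ w (s j) := fun j k hjk =>
    hwa (hs01 j) (hs01 k) (hmono hjk)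
  have hwbd : ∀ j, |w (s j)| ≤ max |w 0| |w 1| := fun j => abs_le.mpr
    ⟨by have := neg_abs_le (w 1); have := le_max_right |w 0| |w 1|
        have : w 1 ≤ w (s j) := hwa (hs01 j) h1m (hs01 j).2; linarith,
     by have := le_abs_self (w 0); have := le_max_left |w 0| |w 1|
        have : w (s j) ≤ w 0 := hwa h0m (hs01 j) (hs01 j).1; linarith⟩
  -- the three series
  set A : ℕ → ℝ := fun k => δ ^ k * π (s (t + 1 + k)) with hAdef
  set B : ℕ → ℝ := fun k => δ ^ k * p (t + 1 + k) with hBdef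
  set C : ℕ → ℝ := fun k => δ ^ k * w (s (t + 1 + k)) with hCdef
  have hA : Summable A := summable_aux hδ0 hδ1 _ _ (fun k => hπbd (t + 1 + k))
  have hC : Summable C := summable_aux hδ0 hδ1 _ _ (fun k => hwbd (t + 1 + k))
  have hB : Summable B := by
    have h1 : Summable fun k => δ ^ (k + (t + 1)) * p (k + (t + 1)) :=
      (summable_nat_add_iff (t + 1)).mpr hpsum
    have h2 := h1.mul_left ((δ ^ (t + 1))⁻¹)
    refine h2.congr fun k => ?_
    have hne : δ ^ (t + 1) ≠ 0 := pow_ne_zero _ hδ0.ne'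
    show (δ ^ (t + 1))⁻¹ * (δ ^ (k + (t + 1)) * p (k + (t + 1))) = δ ^ k * p (t + 1 + k)
    rw [add_comm k (t + 1), pow_add δ (t + 1) k, mul_assoc, inv_mul_cancel_left₀ hne]
  -- split PiVal and WVal
  have hPiv : PiVal δ π s p (t + 1) = (∑' k, A k) - ∑' k, B k := by
    rw [PiVal, ← Summable.tsum_sub hA hB]
    exact tsum_congr fun k => by rw [hAdef, hBdef]; ring
  have hW : WVal δ w s p (t + 1) = (∑' k, C k) + ∑' k, B k := by
    rw [WVal, ← Summable.tsum_add hC hB]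
    exact tsum_congr fun k => by rw [hCdef, hBdef]; ring
  -- bounds on the series
  have hgsum : ∑' k : ℕ, δ ^ k = (1 - δ)⁻¹ := tsum_geometric_of_lt_one hδ0.le hδ1
  have hAle : (∑' k, A k) ≤ π 1 * (1 - δ)⁻¹ := by
    calc (∑' k, A k) ≤ ∑' k : ℕ, δ ^ k * π 1 :=
          Summable.tsum_le_tsum (fun k => mul_le_mul_of_nonneg_left (hπub (t + 1 + k))
            (pow_nonneg hδ0.le k)) hA (hgeom.mul_right _)
      _ = π 1 * (1 - δ)⁻¹ := by
          rw [tsum_mul_right, hgsum]; ring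
  have hCle : (∑' k, C k) ≤ w (s (t + 1)) * (1 - δ)⁻¹ := by
    calc (∑' k, C k) ≤ ∑' k : ℕ, δ ^ k * w (s (t + 1)) :=
          Summable.tsum_le_tsum (fun k => mul_le_mul_of_nonneg_left
            (hwub (t + 1) (t + 1 + k) (Nat.le_add_right _ _)) (pow_nonneg hδ0.le k))
            hC (hgeom.mul_right _)
      _ = w (s (t + 1)) * (1 - δ)⁻¹ := by rw [tsum_mul_right, hgsum]; ring
  -- combine with P-IC at t+1 and E-IC at t
  have hP := hPIC (t + 1)
  have hE := hEIC t
  rw [hPiv] at hP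
  rw [hW] at hE
  rw [div_eq_mul_inv] at hP hE
  have hKpos : (0:ℝ) < (1 - δ)⁻¹ := inv_pos.mpr h1δ
  have hchain : w (s t) * (1 - δ)⁻¹ ≤
      (w (s (t + 1)) + (π 1 - π (s (t + 1)))) * (1 - δ)⁻¹ := by
    nlinarith [hE, hP, hAle, hCle]
  exact le_of_mul_le_mul_right (by linarith [hchain]) hKpos

/-- Patience limit: in each fixed period the optimal knowledge level
is bounded away from 1 uniformly over discount factors. -/
theorem patience_limit_bounded_away
    (π w : ℝ → ℝ)
    (hπc : ContinuousOn π (Set.Icc 0 1)) (hwc : ContinuousOn w (Set.Icc 0 1))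
    (hπm : StrictMonoOn π (Set.Icc 0 1)) (hwa : StrictAntiOn w (Set.Icc 0 1))
    (hGm : StrictMonoOn (fun x => π x + w x) (Set.Icc 0 1)) :
    ∀ t : ℕ, ∃ c : ℝ, c < 1 ∧
      ∀ δ ∈ Set.Ioo (0 : ℝ) 1, ∀ s p : ℕ → ℝ, Optimal δ π w s p → s t ≤ c := by
  have h0m : (0:ℝ) ∈ Set.Icc (0:ℝ) 1 := ⟨le_refl _, zero_le_one⟩
  have h1m : (1:ℝ) ∈ Set.Icc (0:ℝ) 1 := ⟨zero_le_one, le_refl _⟩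
  have key : ∀ t : ℕ, ∃ c : ℝ, 0 ≤ c ∧ c < 1 ∧
      ∀ δ ∈ Set.Ioo (0 : ℝ) 1, ∀ s p : ℕ → ℝ, Implementable δ π w s p → s t ≤ c := by
    intro t
    induction t with
    | zero =>
      exact ⟨0, le_refl _, one_pos, fun δ _ s p h => le_of_eq h.1.2.1⟩
    | succ t ih =>
      obtain ⟨c, hc0, hc1, hc⟩ := ih
      have hcm : c ∈ Set.Icc (0:ℝ) 1 := ⟨hc0, hc1.le⟩
      have hε : 0 < w c - w 1 := sub_pos.mpr (hwa hcm h1m hc1)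
      have hf : ContinuousWithinAt (fun x => π x - w x) (Set.Icc 0 1) 1 :=
        (hπc.sub hwc) 1 h1m
      obtain ⟨η, hη, hball⟩ := Metric.continuousWithinAt_iff.mp hf (w c - w 1) hε
      refine ⟨max c (1 - η / 2), le_trans hc0 (le_max_left _ _),
        max_lt hc1 (by linarith), ?_⟩
      intro δ hδ s p h
      by_contra hgt
      push_neg at hgt
      have hsm : s (t + 1) ∈ Set.Icc (0:ℝ) 1 := h.1.1 (t + 1)
      have hdist : dist (s (t + 1)) 1 < η := by
        rw [Real.dist_eq, abs_of_nonpos (by linarith [hsm.2])]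
        have := le_max_right c (1 - η / 2)
        linarith [hgt]
      have hnear := hball hsm hdist
      rw [Real.dist_eq] at hnear
      have hlow : π 1 - w 1 - (w c - w 1) < π (s (t + 1)) - w (s (t + 1)) := by
        have := abs_lt.mp hnear
        linarith [this.1]
      -- from the star inequality
      have hstar := star_ineq π w hπm.monotoneOn hwa.antitoneOn hδ.1 hδ.2 h t
      have hst : s t ≤ c := hc δ hδ s p h
      have hwst : w c ≤ w (s t) := hwa.antitoneOn (h.1.1 t) hcm hst
      linarith
  intro t
  obtain ⟨c, _, hc1, hc⟩ := key t
  exact ⟨c, hc1, fun δ hδ s p hopt => hc δ hδ s p hopt.1⟩
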